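/- Let C be a finite category and let A and B be subcategories of C with C = A ∪ B, such that both A and B are ideals of C, or both are filters of C. If each of A, B, A ∩ B, and A ∪ B has Euler characteristic, then χ(A ∪ B) = χ(A) + χ(B) − χ(A ∩ B). -/
import Mathlib


open CategoryTheory

namespace CechCover

/-- A subcategory of a small category `C`: a set of objects together with, for each
pair of objects of `C`, a set of morphisms, closed under identities (of objects of the
subcategory) and under composition, all morphisms lying between objects of the
subcategory. -/
structure Subcat (C : Type) [SmallCategory C] where
  objs : Set C
  homs : ∀ x y : C, Set (x ⟶ y)
  homs_subset : ∀ (x y : C), (homs x y).Nonempty → x ∈ objs ∧ y ∈ objs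
  id_mem : ∀ x ∈ objs, 𝟙 x ∈ homs x x
  comp_mem : ∀ {x y z : C} (f : x ⟶ y) (g : y ⟶ z),
    f ∈ homs x y → g ∈ homs y z → f ≫ g ∈ homs x z

variable {C : Type} [SmallCategory C] {A : Type}

/-- The morphisms of the union `⋃ a, D a` of a family of subcategories: those
generated under composition by the morphisms of the `D a`. -/
inductive GenHom (D : A → Subcat C) : ∀ {x y : C}, (x ⟶ y) → Prop
  | of {x y : C} (a : A) (f : x ⟶ y) (hf : f ∈ (D a).homs x y) : GenHom D f
  | comp {x y z : C} (f : x ⟶ y) (g : y ⟶ z) :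
      GenHom D f → GenHom D g → GenHom D (f ≫ g)

/-- `D` is a cover of `C`: the union of the subcategories `D a` is all of `C`. -/
def IsCover (D : A → Subcat C) : Prop :=
  (∀ x : C, ∃ a, x ∈ (D a).objs) ∧ ∀ {x y : C} (f : x ⟶ y), GenHom D f

/-- An ideal of `C`: a full subcategory such that an object `y` belongs to it whenever
`C(y, x)` is nonempty for some object `x` of it. -/
def Subcat.IsIdeal (Dv : Subcat C) : Prop :=
  (∀ x y : C, x ∈ Dv.objs → y ∈ Dv.objs → Dv.homs x y = Set.univ) ∧
  ∀ x y : C, x ∈ Dv.objs → Nonempty (y ⟶ x) → y ∈ Dv.objs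

/-- A filter of `C`: a full subcategory such that an object `y` belongs to it whenever
`C(x, y)` is nonempty for some object `x` of it. -/
def Subcat.IsFilter (Dv : Subcat C) : Prop :=
  (∀ x y : C, x ∈ Dv.objs → y ∈ Dv.objs → Dv.homs x y = Set.univ) ∧
  ∀ x y : C, x ∈ Dv.objs → Nonempty (x ⟶ y) → y ∈ Dv.objs

/-- The objects of a full subcategory on `S ⊆ ob C`, as a finset. -/
noncomputable def objFinset [Fintype C] (S : Set C) : Finset C := by
  classical exact Finset.univ.filter (· ∈ S)

/-- A weighting on the full subcategory of a finite category `C` on the set of objects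
`S`: a vector `w` with `∑_b ζ(a, b) · w(b) = 1` for every object `a` of `S`, where
`ζ(a, b)` is the number of morphisms `a ⟶ b`. -/
def IsWeighting [Fintype C] [∀ x y : C, Fintype (x ⟶ y)] (S : Set C) (w : C → ℚ) : Prop :=
  ∀ a ∈ S, ∑ b ∈ objFinset S, (Fintype.card (a ⟶ b) : ℚ) * w b = 1

/-- A coweighting, dually: `∑_a v(a) · ζ(a, b) = 1` for every object `b` of `S`. -/
def IsCoweighting [Fintype C] [∀ x y : C, Fintype (x ⟶ y)] (S : Set C) (v : C → ℚ) : Prop :=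
  ∀ b ∈ S, ∑ a ∈ objFinset S, v a * (Fintype.card (a ⟶ b) : ℚ) = 1

/-- A finite (full sub)category has Euler characteristic if it admits both a weighting
and a coweighting. -/
def HasEulerChar [Fintype C] [∀ x y : C, Fintype (x ⟶ y)] (S : Set C) : Prop :=
  (∃ w, IsWeighting S w) ∧ (∃ v, IsCoweighting S v)

/-- The Euler characteristic: the sum of the values of a weighting (this is independent
of the choice of weighting, and agrees with the sum of the values of any coweighting,
whenever the category has Euler characteristic). -/
noncomputable def eulerChar [Fintype C] [∀ x y : C, Fintype (x ⟶ y)] (S : Set C) : ℚ := by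
  classical exact if h : ∃ w, IsWeighting S w then ∑ b ∈ objFinset S, h.choose b else 0

end CechCover

open CechCover


section Aux

variable {C : Type} [SmallCategory C] [Fintype C] [∀ x y : C, Fintype (x ⟶ y)]

set_option linter.unusedSectionVars false in
lemma mem_objFinset {S : Set C} {x : C} : x ∈ objFinset S ↔ x ∈ S := by
  classical
  unfold objFinset
  simp

lemma sum_weighting_eq_sum_coweighting {S : Set C} {w v : C → ℚ}
    (hw : IsWeighting S w) (hv : IsCoweighting S v) :
    ∑ b ∈ objFinset S, w b = ∑ a ∈ objFinset S, v a :=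
  calc ∑ b ∈ objFinset S, w b
      = ∑ b ∈ objFinset S, (∑ a ∈ objFinset S, v a * (Fintype.card (a ⟶ b) : ℚ)) * w b := by
        refine Finset.sum_congr rfl fun b hb => ?_
        rw [hv b (mem_objFinset.mp hb), one_mul]
    _ = ∑ a ∈ objFinset S, v a * ∑ b ∈ objFinset S, (Fintype.card (a ⟶ b) : ℚ) * w b := by
        simp only [Finset.sum_mul, Finset.mul_sum, mul_assoc]
        rw [Finset.sum_comm]
    _ = ∑ a ∈ objFinset S, v a := by
        refine Finset.sum_congr rfl fun a ha => ?_
        rw [hw a (mem_objFinset.mp ha), mul_one]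

lemma eulerChar_eq_sum_coweighting {S : Set C} {v : C → ℚ}
    (hS : HasEulerChar S) (hv : IsCoweighting S v) :
    eulerChar S = ∑ a ∈ objFinset S, v a := by
  obtain ⟨hw, -⟩ := hS
  unfold eulerChar
  rw [dif_pos hw]
  exact sum_weighting_eq_sum_coweighting hw.choose_spec hv

lemma eulerChar_eq_sum_weighting {S : Set C} {w : C → ℚ}
    (hS : HasEulerChar S) (hw : IsWeighting S w) :
    eulerChar S = ∑ b ∈ objFinset S, w b := by
  obtain ⟨hw', ⟨v, hv⟩⟩ := hS
  unfold eulerChar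
  rw [dif_pos hw']
  rw [sum_weighting_eq_sum_coweighting hw'.choose_spec hv,
    sum_weighting_eq_sum_coweighting hw hv]

end Aux

/-- For two subcategories `A` and `B` of a finite category `C` with `C = A ∪ B`, both
ideals or both filters, if each of `A`, `B`, `A ∩ B` and `A ∪ B` has Euler
characteristic, then `χ(A ∪ B) = χ(A) + χ(B) − χ(A ∩ B)`. -/
theorem euler_char_union_two
    {C : Type} [SmallCategory C] [Fintype C] [∀ x y : C, Fintype (x ⟶ y)]
    (A B : Subcat C)
    (hcover : IsCover (fun b : Bool => bif b then A else B))
    (h : (A.IsIdeal ∧ B.IsIdeal) ∨ (A.IsFilter ∧ B.IsFilter))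
    (hA : HasEulerChar A.objs) (hB : HasEulerChar B.objs)
    (hAB : HasEulerChar (A.objs ∩ B.objs))
    (hU : HasEulerChar (Set.univ : Set C)) :
    eulerChar (Set.univ : Set C) =
      eulerChar A.objs + eulerChar B.objs - eulerChar (A.objs ∩ B.objs) := by
  classical
  -- the objects of `A` and `B` cover `C`
  have hobj : A.objs ∪ B.objs = (Set.univ : Set C) := by
    ext x
    simp only [Set.mem_univ, iff_true, Set.mem_union]
    obtain ⟨a, ha⟩ := hcover.1 x
    cases a
    · exact Or.inr ha
    · exact Or.inl ha
  have hsub : ∀ S : Set C, objFinset S ⊆ objFinset (Set.univ : Set C) := by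
    intro S x hx
    exact mem_objFinset.mpr (Set.mem_univ x)
  have hunion : objFinset A.objs ∪ objFinset B.objs = objFinset (Set.univ : Set C) := by
    ext x
    simp only [Finset.mem_union, mem_objFinset, ← hobj, Set.mem_union]
  have hinter : objFinset A.objs ∩ objFinset B.objs = objFinset (A.objs ∩ B.objs) := by
    ext x
    simp only [Finset.mem_inter, mem_objFinset, Set.mem_inter_iff]
  rcases h with ⟨hIA, hIB⟩ | ⟨hFA, hFB⟩
  · -- ideal case: a coweighting on `C` restricts to coweightings
    obtain ⟨v, hv⟩ := hU.2
    have key : ∀ S : Set C, (∀ a b : C, b ∈ S → (a ⟶ b) → a ∈ S) → IsCoweighting S v := by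
      intro S hS b hb
      rw [← hv b (Set.mem_univ b)]
      refine Finset.sum_subset (hsub S) fun a _ ha => ?_
      have : IsEmpty (a ⟶ b) := ⟨fun f => ha (mem_objFinset.mpr (hS a b hb f))⟩
      rw [Fintype.card_eq_zero, Nat.cast_zero, mul_zero]
    have hvA : IsCoweighting A.objs v := key _ fun a b hb f => hIA.2 b a hb ⟨f⟩
    have hvB : IsCoweighting B.objs v := key _ fun a b hb f => hIB.2 b a hb ⟨f⟩
    have hvAB : IsCoweighting (A.objs ∩ B.objs) v :=
      key _ fun a b hb f => ⟨hIA.2 b a hb.1 ⟨f⟩, hIB.2 b a hb.2 ⟨f⟩⟩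
    rw [eulerChar_eq_sum_coweighting hU hv, eulerChar_eq_sum_coweighting hA hvA,
      eulerChar_eq_sum_coweighting hB hvB, eulerChar_eq_sum_coweighting hAB hvAB,
      ← hunion, ← hinter, eq_sub_iff_add_eq, Finset.sum_union_inter]
  · -- filter case: a weighting on `C` restricts to weightings
    obtain ⟨w, hw⟩ := hU.1
    have key : ∀ S : Set C, (∀ a b : C, a ∈ S → (a ⟶ b) → b ∈ S) → IsWeighting S w := by
      intro S hS a ha
      rw [← hw a (Set.mem_univ a)]
      refine Finset.sum_subset (hsub S) fun b _ hb => ?_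
      have : IsEmpty (a ⟶ b) := ⟨fun f => hb (mem_objFinset.mpr (hS a b ha f))⟩
      rw [Fintype.card_eq_zero, Nat.cast_zero, zero_mul]
    have hwA : IsWeighting A.objs w := key _ fun a b ha f => hFA.2 a b ha ⟨f⟩
    have hwB : IsWeighting B.objs w := key _ fun a b ha f => hFB.2 a b ha ⟨f⟩
    have hwAB : IsWeighting (A.objs ∩ B.objs) w :=
      key _ fun a b ha f => ⟨hFA.2 a b ha.1 ⟨f⟩, hFB.2 a b ha.2 ⟨f⟩⟩
    rw [eulerChar_eq_sum_weighting hU hw, eulerChar_eq_sum_weighting hA hwA,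
      eulerChar_eq_sum_weighting hB hwB, eulerChar_eq_sum_weighting hAB hwAB,
      ← hunion, ← hinter, eq_sub_iff_add_eq, Finset.sum_union_inter]
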